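/- arXiv:1709.01370 — 4 statements merged into one kernel-verified Lean document; each statement's English description precedes it below -/
import Mathlib

section
/- Let γ : [0,1] → ℂ be an injective continuously differentiable curve with γ'(s) ≠ 0 for all s ∈ [0,1]. Let θ : [0,1] → ℝ be continuous with γ'(t) = |γ'(t)|·exp(iθ(t)) for all t; let a : [0,1) → ℝ be continuous with γ(t) − γ(1) = |γ(t) − γ(1)|·exp(i a(t)) for all t < 1; and let b : (0,1] → ℝ be continuous with γ(t) − γ(0) = |γ(t) − γ(0)|·exp(i b(t)) for all t > 0. Then the limits L₁ = lim_{t→1⁻} a(t) and L₀ = lim_{t→0⁺} b(t) exist in ℝ, and the intrinsic winding satisfies θ(1) − θ(0) = (L₁ − a(0)) + (b(1) − L₀). -/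
open Set Filter

section aux

noncomputable def hh (γ γ' : ℝ → ℂ) : ℝ × ℝ → ℂ :=
  fun p => if p.1 = p.2 then γ' p.1 else (γ p.2 - γ p.1) / ((p.2 - p.1 : ℝ) : ℂ)

def TT : Set (ℝ × ℝ) := {p | 0 ≤ p.1 ∧ p.1 ≤ p.2 ∧ p.2 ≤ 1}

lemma TT_fst {p : ℝ × ℝ} (hp : p ∈ TT) : p.1 ∈ Icc (0:ℝ) 1 := ⟨hp.1, hp.2.1.trans hp.2.2⟩
lemma TT_snd {p : ℝ × ℝ} (hp : p ∈ TT) : p.2 ∈ Icc (0:ℝ) 1 := ⟨hp.1.trans hp.2.1, hp.2.2⟩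

lemma TT_compact : IsCompact TT := by
  have hsub : TT ⊆ Icc ((0:ℝ),(0:ℝ)) ((1:ℝ),(1:ℝ)) := by
    intro p hp
    exact ⟨⟨(TT_fst hp).1, (TT_snd hp).1⟩, ⟨(TT_fst hp).2, (TT_snd hp).2⟩⟩
  have hclosed : IsClosed TT := by
    have h1 : IsClosed {p : ℝ × ℝ | 0 ≤ p.1} := isClosed_le continuous_const continuous_fst
    have h2 : IsClosed {p : ℝ × ℝ | p.1 ≤ p.2} := isClosed_le continuous_fst continuous_snd
    have h3 : IsClosed {p : ℝ × ℝ | p.2 ≤ 1} := isClosed_le continuous_snd continuous_const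
    exact (h1.inter (h2.inter h3))
  exact isCompact_Icc.of_isClosed_subset hclosed hsub

lemma exp_lift_eq {z : ℂ} {x : ℝ} (hz : z ≠ 0)
    (h : z = (‖z‖ : ℂ) * Complex.exp ((x : ℂ) * Complex.I)) :
    Complex.exp ((x : ℂ) * Complex.I) = z / (‖z‖ : ℂ) := by
  have hn : (‖z‖ : ℂ) ≠ 0 := by
    simp [Complex.ofReal_ne_zero, norm_ne_zero_iff, hz]
  rw [eq_div_iff hn]
  linear_combination -h

lemma lift_diff {A B : ℝ}
    (h : Complex.exp ((A:ℂ) * Complex.I) = Complex.exp ((B:ℂ) * Complex.I)) :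
    ∃ n : ℤ, A = B + n * (2 * Real.pi) := by
  rw [Complex.exp_eq_exp_iff_exists_int] at h
  obtain ⟨n, hn⟩ := h
  refine ⟨n, ?_⟩
  have := congrArg Complex.im hn
  simpa using this

lemma intConst {s : Set ℝ} (hs : IsPreconnected s) {f : ℝ → ℝ}
    (hf : ContinuousOn f s) (hint : ∀ x ∈ s, ∃ k : ℤ, f x = k)
    {x y : ℝ} (hx : x ∈ s) (hy : y ∈ s) : f x = f y := by
  have key : ∀ u v : ℝ, u ∈ s → v ∈ s → f u < f v → False := by
    intro u v hu hv hlt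
    have hA : IsPreconnected (f '' s) := hs.image f hf
    have hOC : (f '' s).OrdConnected := hA.ordConnected
    obtain ⟨ku, hku⟩ := hint u hu
    obtain ⟨kv, hkv⟩ := hint v hv
    have hklt : ku < kv := by exact_mod_cast hku ▸ hkv ▸ hlt
    have h1 : f u + 1/2 ∈ Icc (f u) (f v) := by
      constructor
      · linarith
      · have : (ku : ℝ) + 1 ≤ kv := by exact_mod_cast hklt
        rw [hku, hkv]; linarith
    obtain ⟨z, hz, hfz⟩ := hOC.out ⟨u, hu, rfl⟩ ⟨v, hv, rfl⟩ h1
    obtain ⟨k, hk⟩ := hint z hz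
    have h2 : (2 * k : ℝ) = 2 * ku + 1 := by rw [← hk, hfz, hku]; ring
    have : (2 * k : ℤ) = 2 * ku + 1 := by exact_mod_cast h2
    omega
  rcases lt_trichotomy (f x) (f y) with h | h | h
  · exact absurd (key x y hx hy h) (fun h => h.elim)
  · exact h
  · exact absurd (key y x hy hx h) (fun h => h.elim)

lemma hh_contOn (γ γ' : ℝ → ℂ)
    (hderiv : ∀ t ∈ Set.Icc (0 : ℝ) 1, HasDerivWithinAt γ (γ' t) (Set.Icc 0 1) t)
    (hcont : ContinuousOn γ' (Set.Icc 0 1)) :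
    ContinuousOn (hh γ γ') TT := by
  have hγc : ContinuousOn γ (Icc 0 1) := fun t ht => (hderiv t ht).continuousWithinAt
  intro p hp
  rcases eq_or_lt_of_le hp.2.1 with hd | hd
  · set c := p.1 with hc
    rw [Metric.continuousWithinAt_iff]
    intro ε hε
    have hcε : ∀ ε' > 0, ∃ δ > 0, ∀ u ∈ Icc (0:ℝ) 1, dist u c < δ → ‖γ' u - γ' c‖ < ε' := by
      intro ε' hε'
      have := hcont c (TT_fst hp)
      rw [Metric.continuousWithinAt_iff] at this
      obtain ⟨δ, hδ, hδ'⟩ := this ε' hε'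
      exact ⟨δ, hδ, fun u hu hd => by
        have := hδ' hu hd; rwa [dist_eq_norm] at this⟩
    obtain ⟨δ₁, hδ₁, hδ₁'⟩ := hcε (ε/2) (by linarith)
    refine ⟨δ₁/2, by linarith, ?_⟩
    intro q hq hdist
    have hq1 : |q.1 - c| ≤ δ₁/2 := by
      have := le_max_left (dist q.1 p.1) (dist q.2 p.2)
      rw [← Prod.dist_eq] at this
      rw [← Real.dist_eq, hc]; exact le_of_lt (lt_of_le_of_lt this hdist)
    have hq2 : |q.2 - c| ≤ δ₁/2 := by
      have := le_max_right (dist q.1 p.1) (dist q.2 p.2)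
      rw [← Prod.dist_eq] at this
      have hpc : p.2 = c := hd.symm
      rw [← Real.dist_eq, ← hpc]; exact le_of_lt (lt_of_le_of_lt this hdist)
    have hhp : hh γ γ' p = γ' c := by simp [hh, ← hd, hc]
    rw [dist_eq_norm, hhp]
    set S : Set ℝ := Icc 0 1 ∩ Icc (c - δ₁/2) (c + δ₁/2) with hS
    have hSsub : S ⊆ Icc (0:ℝ) 1 := inter_subset_left
    have hSbound : ∀ u ∈ S, ‖γ' u - γ' c‖ ≤ ε/2 := by
      intro u hu
      refine le_of_lt (hδ₁' u (hSsub hu) ?_)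
      have := hu.2
      rw [Real.dist_eq, abs_sub_lt_iff]
      constructor <;> [linarith [this.2]; linarith [this.1]]
    have hq1S : q.1 ∈ S := ⟨TT_fst hq, by rw [abs_sub_le_iff] at hq1; constructor <;> linarith [hq1.1, hq1.2]⟩
    have hq2S : q.2 ∈ S := ⟨TT_snd hq, by rw [abs_sub_le_iff] at hq2; constructor <;> linarith [hq2.1, hq2.2]⟩
    rcases eq_or_lt_of_le hq.2.1 with he | he
    · have : hh γ γ' q = γ' q.1 := by simp [hh, ← he]
      rw [this]
      calc ‖γ' q.1 - γ' c‖ ≤ ε/2 := hSbound q.1 hq1S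
        _ < ε := by linarith
    · have hne : q.1 ≠ q.2 := ne_of_lt he
      have hts : (0:ℝ) < q.2 - q.1 := by linarith
      have hcne : ((q.2 - q.1 : ℝ) : ℂ) ≠ 0 := Complex.ofReal_ne_zero.mpr (ne_of_gt hts)
      have hhq : hh γ γ' q = (γ q.2 - γ q.1) / ((q.2 - q.1 : ℝ) : ℂ) := by simp [hh, hne]
      rw [hhq]
      have hconv : Convex ℝ S := (convex_Icc _ _).inter (convex_Icc _ _)
      have hder : ∀ u ∈ S, HasDerivWithinAt (fun v => γ v - v • γ' c) (γ' u - γ' c) S u := by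
        intro u hu
        exact ((hderiv u (hSsub hu)).mono hSsub).sub
          ((hasDerivWithinAt_id u S).smul_const (γ' c) |>.congr_deriv (by simp))
      have key := hconv.norm_image_sub_le_of_norm_hasDerivWithin_le hder hSbound hq1S hq2S
      have heq : (γ q.2 - γ q.1) / ((q.2 - q.1 : ℝ) : ℂ) - γ' c =
          ((γ q.2 - q.2 • γ' c) - (γ q.1 - q.1 • γ' c)) / ((q.2 - q.1 : ℝ) : ℂ) := by
        have hcne' : ((q.2 : ℂ) - (q.1 : ℂ)) ≠ 0 := by
          rw [← Complex.ofReal_sub]; exact hcne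
        simp only [Complex.real_smul, Complex.ofReal_sub]
        field_simp
        ring
      rw [heq, norm_div, Complex.norm_real, Real.norm_eq_abs, abs_of_pos hts,
        div_lt_iff₀ hts]
      calc ‖(γ q.2 - q.2 • γ' c) - (γ q.1 - q.1 • γ' c)‖
          ≤ ε/2 * ‖q.2 - q.1‖ := key
        _ = ε/2 * (q.2 - q.1) := by rw [Real.norm_eq_abs, abs_of_pos hts]
        _ < ε * (q.2 - q.1) := by nlinarith
  · have hopen : {q : ℝ × ℝ | q.1 < q.2} ∈ nhds p :=
      (isOpen_lt continuous_fst continuous_snd).mem_nhds hd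
    apply ContinuousWithinAt.congr_of_eventuallyEq
      (f := fun q : ℝ × ℝ => (γ q.2 - γ q.1) / ((q.2 - q.1 : ℝ) : ℂ))
    · apply ContinuousWithinAt.div
      · exact ((hγc.comp continuous_snd.continuousOn (fun q hq => TT_snd hq)).sub
          (hγc.comp continuous_fst.continuousOn (fun q hq => TT_fst hq))) p hp
      · exact (Complex.continuous_ofReal.comp (continuous_snd.sub continuous_fst)).continuousWithinAt
      · exact Complex.ofReal_ne_zero.mpr (ne_of_gt (by linarith : (0:ℝ) < p.2 - p.1))
    · filter_upwards [mem_nhdsWithin_of_mem_nhds hopen] with q hq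
      simp [hh, ne_of_lt hq]
    · simp [hh, ne_of_lt hd]

end aux

/-- Intrinsic winding equals the sum of the topological windings around the two
endpoints, for a smooth injective curve `γ : [0,1] → ℂ` with nonvanishing
derivative `γ'`. Here `θ` is a continuous argument lift of `γ'`, `a` is a
continuous argument lift of `t ↦ γ t - γ 1` on `[0,1)`, and `b` is a continuous
argument lift of `t ↦ γ t - γ 0` on `(0,1]`. The limits `L₁ = lim_{t→1⁻} a(t)`
and `L₀ = lim_{t→0⁺} b(t)` exist, and
`θ(1) - θ(0) = (L₁ - a(0)) + (b(1) - L₀)`, i.e.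
`W_int(γ) = W(γ, γ(1)) + W(γ, γ(0))`. -/
theorem stmt2 (γ γ' : ℝ → ℂ) (θ a b : ℝ → ℝ)
    (hInj : Set.InjOn γ (Set.Icc 0 1))
    (hderiv : ∀ t ∈ Set.Icc (0 : ℝ) 1, HasDerivWithinAt γ (γ' t) (Set.Icc 0 1) t)
    (hcont : ContinuousOn γ' (Set.Icc 0 1))
    (hne : ∀ t ∈ Set.Icc (0 : ℝ) 1, γ' t ≠ 0)
    (hθcont : ContinuousOn θ (Set.Icc 0 1))
    (hθ : ∀ t ∈ Set.Icc (0 : ℝ) 1,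
      γ' t = (‖γ' t‖ : ℂ) * Complex.exp ((θ t : ℂ) * Complex.I))
    (hacont : ContinuousOn a (Set.Ico 0 1))
    (ha : ∀ t ∈ Set.Ico (0 : ℝ) 1,
      γ t - γ 1 = (‖γ t - γ 1‖ : ℂ) * Complex.exp ((a t : ℂ) * Complex.I))
    (hbcont : ContinuousOn b (Set.Ioc 0 1))
    (hb : ∀ t ∈ Set.Ioc (0 : ℝ) 1,
      γ t - γ 0 = (‖γ t - γ 0‖ : ℂ) * Complex.exp ((b t : ℂ) * Complex.I)) :
    ∃ L₁ L₀ : ℝ,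
      Tendsto a (nhdsWithin 1 (Set.Ico 0 1)) (nhds L₁) ∧
      Tendsto b (nhdsWithin 0 (Set.Ioc 0 1)) (nhds L₀) ∧
      θ 1 - θ 0 = (L₁ - a 0) + (b 1 - L₀) := by
  set H := hh γ γ' with hHdef
  have hHcont : ContinuousOn H TT := hh_contOn γ γ' hderiv hcont
  have hHne : ∀ p ∈ TT, H p ≠ 0 := by
    intro p hp
    by_cases h : p.1 = p.2
    · simpa [hHdef, hh, h] using hne p.2 (TT_snd hp)
    · simp only [hHdef, hh, if_neg h]
      apply div_ne_zero
      · exact sub_ne_zero.mpr (fun he => h (hInj (TT_snd hp) (TT_fst hp) he).symm)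
      · exact Complex.ofReal_ne_zero.mpr (sub_ne_zero.mpr (fun he => h he.symm))
  have hTne : TT.Nonempty := ⟨(0,0), by constructor <;> norm_num⟩
  obtain ⟨p₀, hp₀T, hp₀min⟩ := TT_compact.exists_isMinOn hTne hHcont.norm
  set m := ‖H p₀‖ with hmdef
  have hm0 : 0 < m := norm_pos_iff.mpr (hHne p₀ hp₀T)
  have hmle : ∀ p ∈ TT, m ≤ ‖H p‖ := fun p hp => hp₀min hp
  have hUC := TT_compact.uniformContinuousOn_of_continuous hHcont
  rw [Metric.uniformContinuousOn_iff] at hUC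
  obtain ⟨δ, hδ0, hδ⟩ := hUC m hm0
  obtain ⟨n₀, hn₀⟩ := exists_nat_one_div_lt hδ0
  set N : ℕ := n₀ + 1 with hNdef
  have hN0 : (0:ℝ) < (N:ℝ) := by positivity
  have hNδ : 1 / (N:ℝ) < δ := by exact_mod_cast hn₀
  set w : ℕ → ℝ → ℝ → ℝ := fun k s t => s + k * (t - s) / N with hwdef
  have hwmem : ∀ s t : ℝ, (s,t) ∈ TT → ∀ k, k ≤ N → (s, w k s t) ∈ TT := by
    intro s t hst k hk
    obtain ⟨h0s, hst', ht1⟩ := hst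
    have hts : (0:ℝ) ≤ t - s := by linarith
    have hkN : (k:ℝ) ≤ N := by exact_mod_cast hk
    have h1 : 0 ≤ (k:ℝ) * (t - s) / N := by positivity
    have h2 : (k:ℝ) * (t - s) / N ≤ t - s := by
      rw [div_le_iff₀ hN0]
      nlinarith
    exact ⟨h0s, by simp only [hwdef]; linarith, by simp only [hwdef]; linarith⟩
  have hwdist : ∀ s t : ℝ, (s,t) ∈ TT → ∀ k : ℕ,
      dist ((s, w (k+1) s t) : ℝ × ℝ) (s, w k s t) < δ := by
    intro s t hst k
    obtain ⟨h0s, hst', ht1⟩ := hst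
    have hts : (0:ℝ) ≤ t - s := by linarith
    have hts1 : t - s ≤ 1 := by linarith
    rw [Prod.dist_eq]
    have h1 : dist s s = 0 := dist_self s
    have h2 : dist (w (k+1) s t) (w k s t) = (t - s)/N := by
      rw [Real.dist_eq]
      have : w (k+1) s t - w k s t = (t - s)/N := by
        simp only [hwdef]
        push_cast
        ring
      rw [this, abs_of_nonneg (by positivity)]
    rw [h1, h2]
    calc max 0 ((t-s)/N) = (t-s)/N := max_eq_right (by positivity)
      _ ≤ 1/(N:ℝ) := by gcongr
      _ < δ := hNδ
  set r : ℕ → ℝ → ℝ → ℂ := fun k s t => H (s, w (k+1) s t) / H (s, w k s t) with hrdef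
  have hrprop : ∀ s t : ℝ, (s,t) ∈ TT → ∀ k, k < N →
      r k s t ∈ Complex.slitPlane ∧ r k s t ≠ 0 := by
    intro s t hst k hk
    have hmem1 : (s, w (k+1) s t) ∈ TT := hwmem s t hst (k+1) hk
    have hmem2 : (s, w k s t) ∈ TT := hwmem s t hst k hk.le
    have ha0 : H (s, w (k+1) s t) ≠ 0 := hHne _ hmem1
    have hb0 : H (s, w k s t) ≠ 0 := hHne _ hmem2
    have hdlt : ‖H (s, w (k+1) s t) - H (s, w k s t)‖ < m := by
      rw [← dist_eq_norm]
      exact hδ _ hmem1 _ hmem2 (hwdist s t hst k)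
    have hnorm1 : ‖r k s t - 1‖ < 1 := by
      have : r k s t - 1 = (H (s, w (k+1) s t) - H (s, w k s t)) / H (s, w k s t) :=
        div_sub_one hb0
      rw [this, norm_div, div_lt_one (norm_pos_iff.mpr hb0)]
      exact lt_of_lt_of_le hdlt (hmle _ hmem2)
    have hre : 0 < (r k s t).re := by
      have h1 : |(r k s t - 1).re| ≤ ‖r k s t - 1‖ := Complex.abs_re_le_norm _
      have h2 : (r k s t - 1).re = (r k s t).re - 1 := by simp
      rw [h2] at h1
      have := abs_le.mp h1
      linarith [this.1, hnorm1]
    exact ⟨Or.inl hre, div_ne_zero ha0 hb0⟩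
  set Θ : ℝ → ℝ → ℝ := fun s t => θ s + ∑ k ∈ Finset.range N, Complex.arg (r k s t) with hΘdef
  have hΘexp : ∀ s t : ℝ, (s,t) ∈ TT →
      Complex.exp ((Θ s t : ℂ) * Complex.I) = H (s,t) / (‖H (s,t)‖ : ℂ) := by
    intro s t hst
    have key : ∀ j, j ≤ N →
        Complex.exp (((θ s + ∑ k ∈ Finset.range j, Complex.arg (r k s t) : ℝ) : ℂ) * Complex.I)
          = H (s, w j s t) / (‖H (s, w j s t)‖ : ℂ) := by
      intro j
      induction j with
      | zero =>
        intro _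
        have hw0 : w 0 s t = s := by simp [hwdef]
        have hHs : H (s, s) = γ' s := by simp [hHdef, hh]
        simp only [Finset.range_zero, Finset.sum_empty, add_zero, hw0, hHs]
        exact exp_lift_eq (hne s (TT_fst hst)) (hθ s (TT_fst hst))
      | succ j ih =>
        intro hj
        have hjN : j < N := hj
        specialize ih hjN.le
        have hmemj := hwmem s t hst j hjN.le
        have hmemj1 := hwmem s t hst (j+1) hj
        obtain ⟨hslit, hrne⟩ := hrprop s t hst j hjN
        have hsplit : ((θ s + ∑ k ∈ Finset.range (j+1), Complex.arg (r k s t) : ℝ) : ℂ) * Complex.I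
            = ((θ s + ∑ k ∈ Finset.range j, Complex.arg (r k s t) : ℝ) : ℂ) * Complex.I
              + ((Complex.arg (r j s t) : ℝ) : ℂ) * Complex.I := by
          rw [Finset.sum_range_succ]
          push_cast
          ring
        rw [hsplit, Complex.exp_add, ih]
        have hexp_arg : Complex.exp (((Complex.arg (r j s t) : ℝ) : ℂ) * Complex.I)
            = r j s t / ((‖r j s t‖ : ℝ) : ℂ) := by
          rw [eq_div_iff (Complex.ofReal_ne_zero.mpr (norm_ne_zero_iff.mpr hrne))]
          rw [mul_comm]
          exact Complex.norm_mul_exp_arg_mul_I _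
        rw [hexp_arg]
        have h1 : H (s, w j s t) ≠ 0 := hHne _ hmemj
        have h2 : H (s, w (j+1) s t) ≠ 0 := hHne _ hmemj1
        have hr_eq : r j s t = H (s, w (j+1) s t) / H (s, w j s t) := rfl
        generalize hx : H (s, w j s t) = x at *
        generalize hy : H (s, w (j+1) s t) = y at *
        have hn1 : (‖x‖ : ℂ) ≠ 0 := Complex.ofReal_ne_zero.mpr (norm_ne_zero_iff.mpr h1)
        have hn2 : (‖y‖ : ℂ) ≠ 0 := Complex.ofReal_ne_zero.mpr (norm_ne_zero_iff.mpr h2)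
        have hn1' : ((‖x‖ : ℝ) : ℂ) ≠ 0 := by
          exact hn1
        have hn2' : ((‖y‖ : ℝ) : ℂ) ≠ 0 := by
          exact hn2
        rw [hr_eq, norm_div, Complex.ofReal_div]
        field_simp
    have hwN : w N s t = t := by
      simp only [hwdef]
      field_simp
      ring
    have := key N le_rfl
    rw [hwN] at this
    exact this
  have hφcont : ∀ k : ℕ, Continuous (fun p : ℝ × ℝ => ((p.1, w k p.1 p.2) : ℝ × ℝ)) := by
    intro k
    apply continuous_fst.prodMk
    simp only [hwdef]
    fun_prop
  have hφmaps : ∀ k, k ≤ N → MapsTo (fun p : ℝ × ℝ => ((p.1, w k p.1 p.2) : ℝ × ℝ)) TT TT :=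
    fun k hk p hp => hwmem p.1 p.2 hp k hk
  have hΘcont : ContinuousOn (fun p : ℝ × ℝ => Θ p.1 p.2) TT := by
    apply ContinuousOn.add
    · exact hθcont.comp continuous_fst.continuousOn (fun p hp => TT_fst hp)
    · apply continuousOn_finset_sum
      intro k hk
      have hk' : k < N := Finset.mem_range.mp hk
      have hgc : ContinuousOn (fun p : ℝ × ℝ => r k p.1 p.2) TT := by
        apply ContinuousOn.div
        · exact hHcont.comp (hφcont (k+1)).continuousOn (hφmaps (k+1) hk')
        · exact hHcont.comp (hφcont k).continuousOn (hφmaps k hk'.le)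
        · intro p hp
          exact hHne _ (hwmem p.1 p.2 hp k hk'.le)
      intro p hp
      exact ContinuousAt.comp_continuousWithinAt (g := Complex.arg)
        (f := fun p : ℝ × ℝ => r k p.1 p.2) (x := p)
        (Complex.continuousAt_arg (hrprop p.1 p.2 hp k hk').1) (hgc p hp)
  have hΘdiag : ∀ s ∈ Icc (0:ℝ) 1, Θ s s = θ s := by
    intro s hs
    have hws : ∀ k : ℕ, w k s s = s := by intro k; simp [hwdef]
    have hr1 : ∀ k : ℕ, r k s s = 1 := by
      intro k
      have hHs : H (s, s) ≠ 0 := by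
        have : ((s,s) : ℝ × ℝ) ∈ TT := ⟨hs.1, le_refl s, hs.2⟩
        exact hHne _ this
      simp only [hrdef, hws]
      exact div_self hHs
    simp [hΘdef, hr1]
  -- the two edge functions
  set A : ℝ → ℝ := fun s => Θ s 1 with hAdef
  set B : ℝ → ℝ := fun t => Θ 0 t with hBdef
  have hATT : ∀ s ∈ Icc (0:ℝ) 1, ((s, (1:ℝ)) : ℝ × ℝ) ∈ TT := fun s hs => ⟨hs.1, hs.2, le_refl 1⟩
  have hBTT : ∀ t ∈ Icc (0:ℝ) 1, (((0:ℝ), t) : ℝ × ℝ) ∈ TT := fun t ht => ⟨le_refl 0, ht.1, ht.2⟩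
  have hAcont : ContinuousOn A (Icc 0 1) :=
    hΘcont.comp (continuous_id.prodMk continuous_const).continuousOn (fun s hs => hATT s hs)
  have hBcont : ContinuousOn B (Icc 0 1) :=
    hΘcont.comp (continuous_const.prodMk continuous_id).continuousOn (fun t ht => hBTT t ht)
  have h1I : (1:ℝ) ∈ Icc (0:ℝ) 1 := ⟨zero_le_one, le_refl 1⟩
  have h0I : (0:ℝ) ∈ Icc (0:ℝ) 1 := ⟨le_refl 0, zero_le_one⟩
  have h0Ico : (0:ℝ) ∈ Ico (0:ℝ) 1 := ⟨le_refl 0, zero_lt_one⟩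
  have h1Ioc : (1:ℝ) ∈ Ioc (0:ℝ) 1 := ⟨zero_lt_one, le_refl 1⟩
  -- relation between a and A on [0,1)
  have hz1 : ∀ s ∈ Ico (0:ℝ) 1, γ s - γ 1 ≠ 0 := fun s hs =>
    sub_ne_zero.mpr (fun he => (ne_of_lt hs.2) (hInj ⟨hs.1, hs.2.le⟩ h1I he))
  have haA : ∀ s ∈ Ico (0:ℝ) 1, ∃ n : ℤ, A s = (a s + Real.pi) + n * (2 * Real.pi) := by
    intro s hs
    have hsI : s ∈ Icc (0:ℝ) 1 := ⟨hs.1, hs.2.le⟩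
    have hz := hz1 s hs
    have hexpa : Complex.exp ((a s : ℂ) * Complex.I) = (γ s - γ 1) / ((‖γ s - γ 1‖:ℝ):ℂ) :=
      exp_lift_eq hz (ha s hs)
    have hexpA : Complex.exp ((A s : ℂ) * Complex.I) = H (s,1) / ((‖H (s,1)‖:ℝ):ℂ) :=
      hΘexp s 1 (hATT s hsI)
    have hsne : s ≠ 1 := ne_of_lt hs.2
    have hHs1 : H (s,1) = (γ 1 - γ s) / ((1 - s : ℝ) : ℂ) := by
      simp [hHdef, hh, hsne]
    have hc0 : (0:ℝ) < 1 - s := by linarith [hs.2]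
    have hnz : ‖γ s - γ 1‖ ≠ 0 := norm_ne_zero_iff.mpr hz
    have hratio : H (s,1) / ((‖H (s,1)‖:ℝ):ℂ) = -((γ s - γ 1) / ((‖γ s - γ 1‖:ℝ):ℂ)) := by
      rw [hHs1]
      have h2 : ‖(γ 1 - γ s) / ((1 - s : ℝ):ℂ)‖ = ‖γ s - γ 1‖ / (1 - s) := by
        rw [norm_div, Complex.norm_real, Real.norm_eq_abs, abs_of_pos hc0, norm_sub_rev]
      have hc0' : ((1 - s:ℝ):ℂ) ≠ 0 := Complex.ofReal_ne_zero.mpr hc0.ne'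
      rw [h2, Complex.ofReal_div, div_div_div_comm, div_self hc0', div_one,
        ← neg_sub (γ s) (γ 1), neg_div]
    have hee : Complex.exp ((A s : ℂ) * Complex.I)
        = Complex.exp (((a s + Real.pi : ℝ):ℂ) * Complex.I) := by
      have hsplit : ((a s + Real.pi : ℝ):ℂ) * Complex.I
          = (a s :ℂ) * Complex.I + (Real.pi:ℂ) * Complex.I := by push_cast; ring
      rw [hexpA, hratio, ← hexpa, hsplit, Complex.exp_add, Complex.exp_pi_mul_I]
      ring
    exact lift_diff hee
  set Fa : ℝ → ℝ := fun s => (A s - a s - Real.pi) / (2 * Real.pi) with hFadef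
  have hFaint : ∀ s ∈ Ico (0:ℝ) 1, ∃ k : ℤ, Fa s = k := by
    intro s hs
    obtain ⟨n, hn⟩ := haA s hs
    refine ⟨n, ?_⟩
    have h2π : (2 * Real.pi) ≠ 0 := by positivity
    rw [hFadef]
    field_simp
    linarith [hn]
  have hFacont : ContinuousOn Fa (Ico 0 1) :=
    (((hAcont.mono Ico_subset_Icc_self).sub hacont).sub continuousOn_const).div_const _
  have hFaconst : ∀ s ∈ Ico (0:ℝ) 1, Fa s = Fa 0 :=
    fun s hs => intConst isPreconnected_Ico hFacont hFaint hs h0Ico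
  have haeq : ∀ s ∈ Ico (0:ℝ) 1, a s = A s - Real.pi - 2 * Real.pi * Fa 0 := by
    intro s hs
    have h1 := hFaconst s hs
    rw [hFadef] at h1
    have h2π : (2 * Real.pi) ≠ 0 := by positivity
    field_simp at h1
    have hFa0 : 2 * Real.pi * Fa 0 = A 0 - a 0 - Real.pi := by
      rw [hFadef]; field_simp
    rw [hFa0]
    linarith [h1]
  have hL1 : Tendsto a (nhdsWithin 1 (Ico 0 1))
      (nhds (A 1 - Real.pi - 2 * Real.pi * Fa 0)) := by
    have h1 : Tendsto A (nhdsWithin 1 (Ico 0 1)) (nhds (A 1)) :=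
      (hAcont 1 h1I).mono_left (nhdsWithin_mono 1 Ico_subset_Icc_self)
    have h2 := (h1.sub_const Real.pi).sub_const (2 * Real.pi * Fa 0)
    apply Tendsto.congr' ?_ h2
    filter_upwards [self_mem_nhdsWithin] with s hs
    exact (haeq s hs).symm
  -- relation between b and B on (0,1]
  have hz0 : ∀ t ∈ Ioc (0:ℝ) 1, γ t - γ 0 ≠ 0 := fun t ht =>
    sub_ne_zero.mpr (fun he => (ne_of_gt ht.1) (hInj ⟨ht.1.le, ht.2⟩ h0I he))
  have hbB : ∀ t ∈ Ioc (0:ℝ) 1, ∃ n : ℤ, B t = b t + n * (2 * Real.pi) := by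
    intro t ht
    have htI : t ∈ Icc (0:ℝ) 1 := ⟨ht.1.le, ht.2⟩
    have hz := hz0 t ht
    have hexpb : Complex.exp ((b t : ℂ) * Complex.I) = (γ t - γ 0) / ((‖γ t - γ 0‖:ℝ):ℂ) :=
      exp_lift_eq hz (hb t ht)
    have hexpB : Complex.exp ((B t : ℂ) * Complex.I) = H (0,t) / ((‖H (0,t)‖:ℝ):ℂ) :=
      hΘexp 0 t (hBTT t htI)
    have htne : (0:ℝ) ≠ t := (ne_of_gt ht.1).symm
    have hH0t : H (0,t) = (γ t - γ 0) / ((t - 0 : ℝ) : ℂ) := by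
      simp only [hHdef, hh]
      rw [if_neg htne]
    have hc0 : (0:ℝ) < t - 0 := by simpa using ht.1
    have hnz : ‖γ t - γ 0‖ ≠ 0 := norm_ne_zero_iff.mpr hz
    have hratio : H (0,t) / ((‖H (0,t)‖:ℝ):ℂ) = (γ t - γ 0) / ((‖γ t - γ 0‖:ℝ):ℂ) := by
      rw [hH0t]
      have h2 : ‖(γ t - γ 0) / ((t - 0 : ℝ):ℂ)‖ = ‖γ t - γ 0‖ / (t - 0) := by
        rw [norm_div, Complex.norm_real, Real.norm_eq_abs, abs_of_pos hc0]
      have hc0' : ((t - 0:ℝ):ℂ) ≠ 0 := Complex.ofReal_ne_zero.mpr hc0.ne'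
      rw [h2, Complex.ofReal_div, div_div_div_comm, div_self hc0', div_one]
    have hee : Complex.exp ((B t : ℂ) * Complex.I)
        = Complex.exp ((b t : ℂ) * Complex.I) := by
      rw [hexpB, hratio, ← hexpb]
    exact lift_diff hee
  set Fb : ℝ → ℝ := fun t => (B t - b t) / (2 * Real.pi) with hFbdef
  have hFbint : ∀ t ∈ Ioc (0:ℝ) 1, ∃ k : ℤ, Fb t = k := by
    intro t ht
    obtain ⟨n, hn⟩ := hbB t ht
    refine ⟨n, ?_⟩
    have h2π : (2 * Real.pi) ≠ 0 := by positivity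
    rw [hFbdef]
    field_simp
    linarith [hn]
  have hFbcont : ContinuousOn Fb (Ioc 0 1) :=
    ((hBcont.mono Ioc_subset_Icc_self).sub hbcont).div_const _
  have hFbconst : ∀ t ∈ Ioc (0:ℝ) 1, Fb t = Fb 1 :=
    fun t ht => intConst isPreconnected_Ioc hFbcont hFbint ht h1Ioc
  have hbeq : ∀ t ∈ Ioc (0:ℝ) 1, b t = B t - 2 * Real.pi * Fb 1 := by
    intro t ht
    have h1 := hFbconst t ht
    rw [hFbdef] at h1
    have h2π : (2 * Real.pi) ≠ 0 := by positivity
    field_simp at h1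
    have hFb1 : 2 * Real.pi * Fb 1 = B 1 - b 1 := by
      rw [hFbdef]; field_simp
    rw [hFb1]
    linarith [h1]
  have hL0 : Tendsto b (nhdsWithin 0 (Ioc 0 1))
      (nhds (B 0 - 2 * Real.pi * Fb 1)) := by
    have h1 : Tendsto B (nhdsWithin 0 (Ioc 0 1)) (nhds (B 0)) :=
      (hBcont 0 h0I).mono_left (nhdsWithin_mono 0 Ioc_subset_Icc_self)
    have h2 := h1.sub_const (2 * Real.pi * Fb 1)
    apply Tendsto.congr' ?_ h2
    filter_upwards [self_mem_nhdsWithin] with t ht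
    exact (hbeq t ht).symm
  refine ⟨A 1 - Real.pi - 2 * Real.pi * Fa 0, B 0 - 2 * Real.pi * Fb 1, hL1, hL0, ?_⟩
  have hA1 : A 1 = θ 1 := hΘdiag 1 h1I
  have hB0 : B 0 = θ 0 := hΘdiag 0 h0I
  have hA0B1 : A 0 = B 1 := rfl
  have ha0 : a 0 = A 0 - Real.pi - 2 * Real.pi * Fa 0 := haeq 0 h0Ico
  have hb1 : b 1 = B 1 - 2 * Real.pi * Fb 1 := hbeq 1 h1Ioc
  rw [← hA1, ← hB0, ha0, hb1, hA0B1]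
  ring
end

section
/- Let G be a simple graph and let M, M' be matchings of G. Then the loop-flip M'' of M' towards M is a matching of G whose support (vertex set covered) equals the support of M'. -/
variable {V : Type*} {G : SimpleGraph V}

/-- The vertex set of the connected component of `v` in the subgraph `H`:
all vertices reachable from `v` using edges of `H`. -/
def reachSet (H : G.Subgraph) (v : V) : Set V := {w | Relation.ReflTransGen H.Adj v w}

/-- `v` lies in a cycle component of the subgraph `H`: its connected component in
`H` is finite and every vertex of the component is incident to exactly two edges
of `H` (i.e. has exactly two neighbours). -/
def InCycleComp (H : G.Subgraph) (v : V) : Prop :=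
  (reachSet H v).Finite ∧ ∀ w ∈ reachSet H v, {u | H.Adj w u}.ncard = 2

lemma reachSet_eq_of_adj {H : G.Subgraph} {v w : V} (h : H.Adj v w) :
    reachSet H v = reachSet H w := by
  ext u
  constructor
  · intro hu
    exact Relation.ReflTransGen.trans (Relation.ReflTransGen.single h.symm) hu
  · intro hu
    exact Relation.ReflTransGen.trans (Relation.ReflTransGen.single h) hu

lemma inCycleComp_iff_of_adj {H : G.Subgraph} {v w : V} (h : H.Adj v w) :
    InCycleComp H v ↔ InCycleComp H w := by
  unfold InCycleComp
  rw [reachSet_eq_of_adj h]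

/-- The loop-flip of `M'` towards `M`: the subgraph of `M ⊔ M'` whose edges are
the edges of `M` lying in a cycle component of `M ⊔ M'` together with the edges
of `M'` not lying in a cycle component of `M ⊔ M'`. Its vertex set is the set of
covered vertices (its support). -/
def loopFlip (M M' : G.Subgraph) : G.Subgraph where
  verts := {v | ∃ w, (M.Adj v w ∧ InCycleComp (M ⊔ M') v) ∨
    (M'.Adj v w ∧ ¬ InCycleComp (M ⊔ M') v)}
  Adj v w := (M.Adj v w ∧ InCycleComp (M ⊔ M') v) ∨
    (M'.Adj v w ∧ ¬ InCycleComp (M ⊔ M') v)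
  adj_sub := by
    rintro v w (⟨h, -⟩ | ⟨h, -⟩)
    · exact M.adj_sub h
    · exact M'.adj_sub h
  edge_vert := by
    intro v w h
    exact ⟨w, h⟩
  symm := by
    constructor
    rintro v w (⟨h, hc⟩ | ⟨h, hc⟩)
    · exact Or.inl ⟨h.symm,
        (inCycleComp_iff_of_adj (H := M ⊔ M')
          (SimpleGraph.Subgraph.sup_adj.mpr (Or.inl h))).mp hc⟩
    · refine Or.inr ⟨h.symm, fun hcw => hc ?_⟩
      exact (inCycleComp_iff_of_adj (H := M ⊔ M')
        (SimpleGraph.Subgraph.sup_adj.mpr (Or.inr h))).mpr hcw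

lemma matching_nbr_subsingleton {M : G.Subgraph} (hM : M.IsMatching) (v : V) :
    {u | M.Adj v u}.Subsingleton := fun a ha b hb =>
  ((hM (M.edge_vert ha)).unique ha hb)

lemma inCycleComp_matched {M M' : G.Subgraph} (hM : M.IsMatching) (hM' : M'.IsMatching)
    {v : V} (hc : InCycleComp (M ⊔ M') v) :
    (∃ a, M.Adj v a) ∧ (∃ b, M'.Adj v b) := by
  have h2 : {u | (M ⊔ M').Adj v u}.ncard = 2 := hc.2 v Relation.ReflTransGen.refl
  constructor
  · by_contra h
    push_neg at h
    have hsub : {u | (M ⊔ M').Adj v u}.Subsingleton := by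
      intro a ha b hb
      rcases ha with ha | ha
      · exact absurd ha (h a)
      rcases hb with hb | hb
      · exact absurd hb (h b)
      exact matching_nbr_subsingleton hM' v ha hb
    have := (Set.ncard_le_one (s := {u | (M ⊔ M').Adj v u}) hsub.finite).mpr
      (fun a ha b hb => hsub ha hb)
    omega
  · by_contra h
    push_neg at h
    have hsub : {u | (M ⊔ M').Adj v u}.Subsingleton := by
      intro a ha b hb
      rcases ha with ha | ha
      · rcases hb with hb | hb
        · exact matching_nbr_subsingleton hM v ha hb
        · exact absurd hb (h b)
      · exact absurd ha (h a)
    have := (Set.ncard_le_one (s := {u | (M ⊔ M').Adj v u}) hsub.finite).mpr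
      (fun a ha b hb => hsub ha hb)
    omega

/-- The loop-flip `M''` of `M'` towards `M` of two matchings is a matching whose
support (set of covered vertices) equals the support of `M'`. -/
theorem stmt4 (M M' : G.Subgraph) (hM : M.IsMatching) (hM' : M'.IsMatching) :
    (loopFlip M M').IsMatching ∧ (loopFlip M M').support = M'.support := by
  constructor
  · intro v hv
    obtain ⟨w, hw⟩ := hv
    by_cases hc : InCycleComp (M ⊔ M') v
    · obtain ⟨⟨a, ha⟩, -⟩ := inCycleComp_matched hM hM' hc
      refine ⟨a, Or.inl ⟨ha, hc⟩, ?_⟩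
      rintro y (⟨hy, -⟩ | ⟨-, hnc⟩)
      · exact (hM (M.edge_vert hy)).unique hy ha
      · exact absurd hc hnc
    · rcases hw with ⟨hw, hcv⟩ | ⟨hw, -⟩
      · exact absurd hcv hc
      refine ⟨w, Or.inr ⟨hw, hc⟩, ?_⟩
      rintro y (⟨-, hcv⟩ | ⟨hy, -⟩)
      · exact absurd hcv hc
      · exact (hM' (M'.edge_vert hy)).unique hy hw
  · ext v
    simp only [SimpleGraph.Subgraph.mem_support]
    constructor
    · rintro ⟨w, ⟨-, hc⟩ | ⟨hw, -⟩⟩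
      · obtain ⟨-, b, hb⟩ := inCycleComp_matched hM hM' hc
        exact ⟨b, hb⟩
      · exact ⟨w, hw⟩
    · rintro ⟨w, hw⟩
      by_cases hc : InCycleComp (M ⊔ M') v
      · obtain ⟨⟨a, ha⟩, -⟩ := inCycleComp_matched hM hM' hc
        exact ⟨a, Or.inl ⟨ha, hc⟩⟩
      · exact ⟨w, Or.inr ⟨hw, hc⟩⟩
end

section
/- Let G be a finite simple graph and let S, S' be vertex sets such that the set 𝓜 of matchings of G with support S and the set 𝓜' of matchings of G with support S' are both nonempty. Let M and M' be independent random matchings, uniformly distributed on 𝓜 and 𝓜' respectively. Then the loop-flip M'' of M' towards M is uniformly distributed on 𝓜'. -/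
variable {V : Type*} {G : SimpleGraph V}

lemma loopFlip_adj {M M' : G.Subgraph} {v w : V} :
    (loopFlip M M').Adj v w ↔ ((M.Adj v w ∧ InCycleComp (M ⊔ M') v) ∨
      (M'.Adj v w ∧ ¬ InCycleComp (M ⊔ M') v)) := Iff.rfl

lemma mem_loopFlip_verts {M M' : G.Subgraph} {v : V} :
    v ∈ (loopFlip M M').verts ↔ ∃ w, (M.Adj v w ∧ InCycleComp (M ⊔ M') v) ∨
      (M'.Adj v w ∧ ¬ InCycleComp (M ⊔ M') v) := Iff.rfl

/-- In a cycle component of `M ⊔ M'` (with `M`, `M'` matchings), every vertex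
has both an `M`-partner and an `M'`-partner. -/
lemma partner_of_inCycleComp {M M' : G.Subgraph} (hM : M.IsMatching)
    (hM' : M'.IsMatching) {v : V} (hc : InCycleComp (M ⊔ M') v) :
    (∃ w, M.Adj v w) ∧ (∃ w, M'.Adj v w) := by
  have h2 : {u | (M ⊔ M').Adj v u}.ncard = 2 := hc.2 v Relation.ReflTransGen.refl
  have hssM : {u | M.Adj v u}.Subsingleton := fun a ha b hb =>
    (hM (M.edge_vert ha)).unique ha hb
  have hssM' : {u | M'.Adj v u}.Subsingleton := fun a ha b hb =>
    (hM' (M'.edge_vert ha)).unique ha hb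
  constructor
  · by_contra h
    push_neg at h
    have he : {u | (M ⊔ M').Adj v u} = {u | M'.Adj v u} := by
      ext u
      simp only [Set.mem_setOf_eq, SimpleGraph.Subgraph.sup_adj]
      exact ⟨fun h' => h'.resolve_left (h u), Or.inr⟩
    rw [he] at h2
    rcases hssM'.eq_empty_or_singleton with h0 | ⟨a, h1⟩
    · rw [h0] at h2; simp at h2
    · rw [h1] at h2; simp at h2
  · by_contra h
    push_neg at h
    have he : {u | (M ⊔ M').Adj v u} = {u | M.Adj v u} := by
      ext u
      simp only [Set.mem_setOf_eq, SimpleGraph.Subgraph.sup_adj]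
      exact ⟨fun h' => h'.resolve_right (h u), Or.inl⟩
    rw [he] at h2
    rcases hssM.eq_empty_or_singleton with h0 | ⟨a, h1⟩
    · rw [h0] at h2; simp at h2
    · rw [h1] at h2; simp at h2

lemma loopFlip_isMatching {M M' : G.Subgraph} (hM : M.IsMatching)
    (hM' : M'.IsMatching) : (loopFlip M M').IsMatching := by
  intro v hv
  obtain ⟨w, hw⟩ := mem_loopFlip_verts.mp hv
  by_cases hc : InCycleComp (M ⊔ M') v
  · obtain ⟨⟨a, ha⟩, -⟩ := partner_of_inCycleComp hM hM' hc
    refine ⟨a, Or.inl ⟨ha, hc⟩, ?_⟩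
    rintro u (⟨hu, -⟩ | ⟨-, hnc⟩)
    · exact (hM (M.edge_vert ha)).unique hu ha
    · exact absurd hc hnc
  · rcases hw with ⟨-, hcc⟩ | ⟨hw, -⟩
    · exact absurd hcc hc
    refine ⟨w, Or.inr ⟨hw, hc⟩, ?_⟩
    rintro u (⟨-, hcc⟩ | ⟨hu, -⟩)
    · exact absurd hcc hc
    · exact (hM' (M'.edge_vert hw)).unique hu hw

lemma loopFlip_verts {M M' : G.Subgraph} (hM : M.IsMatching)
    (hM' : M'.IsMatching) : (loopFlip M M').verts = M'.verts := by
  ext v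
  rw [mem_loopFlip_verts]
  constructor
  · rintro ⟨w, ⟨hw, hc⟩ | ⟨hw, -⟩⟩
    · obtain ⟨-, ⟨a, ha⟩⟩ := partner_of_inCycleComp hM hM' hc
      exact M'.edge_vert ha
    · exact M'.edge_vert hw
  · intro hv
    obtain ⟨w, hw, -⟩ := hM' hv
    by_cases hc : InCycleComp (M ⊔ M') v
    · obtain ⟨⟨a, ha⟩, -⟩ := partner_of_inCycleComp hM hM' hc
      exact ⟨a, Or.inl ⟨ha, hc⟩⟩
    · exact ⟨w, Or.inr ⟨hw, hc⟩⟩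

lemma loopFlip_sup {M M' : G.Subgraph} (hM : M.IsMatching)
    (hM' : M'.IsMatching) : loopFlip M M' ⊔ loopFlip M' M = M ⊔ M' := by
  have hC : InCycleComp (M' ⊔ M) = InCycleComp (M ⊔ M') :=
    congrArg InCycleComp (sup_comm M' M)
  apply SimpleGraph.Subgraph.ext
  · show (loopFlip M M').verts ∪ (loopFlip M' M).verts = M.verts ∪ M'.verts
    rw [loopFlip_verts hM hM', loopFlip_verts hM' hM]
    exact Set.union_comm _ _
  · ext v w
    show (loopFlip M M').Adj v w ∨ (loopFlip M' M).Adj v w ↔ M.Adj v w ∨ M'.Adj v w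
    rw [loopFlip_adj, loopFlip_adj, hC]
    tauto

lemma loopFlip_loopFlip {M M' : G.Subgraph} (hM : M.IsMatching)
    (hM' : M'.IsMatching) :
    loopFlip (loopFlip M' M) (loopFlip M M') = M' := by
  have hsup : loopFlip M' M ⊔ loopFlip M M' = M ⊔ M' := by
    rw [loopFlip_sup hM' hM, sup_comm]
  have hC : InCycleComp (loopFlip M' M ⊔ loopFlip M M') = InCycleComp (M ⊔ M') :=
    congrArg InCycleComp hsup
  have hC' : InCycleComp (M' ⊔ M) = InCycleComp (M ⊔ M') :=
    congrArg InCycleComp (sup_comm M' M)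
  apply SimpleGraph.Subgraph.ext
  · rw [loopFlip_verts (loopFlip_isMatching hM' hM) (loopFlip_isMatching hM hM'),
      loopFlip_verts hM hM']
  · ext v w
    rw [loopFlip_adj, hC, loopFlip_adj, loopFlip_adj, hC']
    by_cases hc : InCycleComp (M ⊔ M') v <;> tauto

/-- Let `G` be a finite simple graph and `𝓜`, `𝓜'` the (nonempty) sets of
matchings with supports `S`, `S'`. If `M` and `M'` are independent and uniformly
distributed on `𝓜` and `𝓜'`, then the loop-flip of `M'` towards `M` is uniform
on `𝓜'`: for every `N ∈ 𝓜'` the number of pairs `(M, M') ∈ 𝓜 × 𝓜'` with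
loop-flip `N` is `|𝓜| = |𝓜 × 𝓜'| / |𝓜'|`, and for `N ∉ 𝓜'` it is `0`. -/
theorem stmt5 [Fintype V] (S S' : Set V)
    (hne : {M : G.Subgraph | M.IsMatching ∧ M.verts = S}.Nonempty)
    (hne' : {M : G.Subgraph | M.IsMatching ∧ M.verts = S'}.Nonempty) :
    ∀ N : G.Subgraph,
      ((N.IsMatching ∧ N.verts = S') →
        {p : G.Subgraph × G.Subgraph |
            (p.1.IsMatching ∧ p.1.verts = S) ∧ (p.2.IsMatching ∧ p.2.verts = S') ∧
            loopFlip p.1 p.2 = N}.ncard =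
          {M : G.Subgraph | M.IsMatching ∧ M.verts = S}.ncard) ∧
      (¬ (N.IsMatching ∧ N.verts = S') →
        {p : G.Subgraph × G.Subgraph |
            (p.1.IsMatching ∧ p.1.verts = S) ∧ (p.2.IsMatching ∧ p.2.verts = S') ∧
            loopFlip p.1 p.2 = N}.ncard = 0) := by
  intro N
  constructor
  · rintro ⟨hNm, hNv⟩
    rw [← Nat.card_coe_set_eq, ← Nat.card_coe_set_eq]
    apply Nat.card_congr
    refine
      { toFun := fun p => ⟨loopFlip p.1.2 p.1.1, ?_, ?_⟩
        invFun := fun A => ⟨(loopFlip N A.1, loopFlip A.1 N), ?_, ?_, ?_⟩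
        left_inv := ?_
        right_inv := ?_ }
    · exact loopFlip_isMatching p.2.2.1.1 p.2.1.1
    · rw [loopFlip_verts p.2.2.1.1 p.2.1.1]; exact p.2.1.2
    · refine ⟨loopFlip_isMatching hNm A.2.1, ?_⟩
      rw [loopFlip_verts hNm A.2.1]; exact A.2.2
    · refine ⟨loopFlip_isMatching A.2.1 hNm, ?_⟩
      rw [loopFlip_verts A.2.1 hNm]; exact hNv
    · exact loopFlip_loopFlip A.2.1 hNm
    · rintro ⟨⟨M, M'⟩, ⟨hm1, hv1⟩, ⟨hm2, hv2⟩, hflip⟩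
      apply Subtype.ext
      simp only
      rw [← hflip]
      exact Prod.ext (loopFlip_loopFlip hm2 hm1) (loopFlip_loopFlip hm1 hm2)
    · rintro ⟨A, hA⟩
      apply Subtype.ext
      simp only
      exact loopFlip_loopFlip hNm hA.1
  · intro hN
    have he : {p : G.Subgraph × G.Subgraph |
        (p.1.IsMatching ∧ p.1.verts = S) ∧ (p.2.IsMatching ∧ p.2.verts = S') ∧
        loopFlip p.1 p.2 = N} = ∅ := by
      ext p
      simp only [Set.mem_setOf_eq, Set.mem_empty_iff_false, iff_false]
      rintro ⟨⟨h1, hv1⟩, ⟨h2, hv2⟩, hflip⟩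
      exact hN ⟨hflip ▸ loopFlip_isMatching h1 h2,
        by rw [← hflip, loopFlip_verts h1 h2, hv2]⟩
    rw [he, Set.ncard_empty]
end

section
/- Let V be a type, X = (x_0, …, x_n) a finite sequence in V, and 0 ≤ T ≤ n. Let Y = (Y_0, …, Y_m) be the forward loop-erasure of the initial segment (x_0, …, x_T). Let S = min{ s : Y_s ∈ {x_T, …, x_n} } (which exists since Y_m = x_T), and let τ = max{ t ≤ n : x_t = Y_S } (which satisfies τ ≥ T). Then the forward loop-erasure of X equals the concatenation of (Y_0, …, Y_S) with the forward loop-erasure of (x_τ, …, x_n) with its first entry removed. -/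
/-- Auxiliary accumulator-based loop erasure: the accumulator is the loop-erasure
of the part of the path already processed. When the next point `x` already appears
in the accumulator, the accumulated path is truncated just after the earlier
occurrence of `x`; this implements the recursive definition of the forward
loop-erasure (erase the first chronological loop and recurse). -/
def loopEraseAux {V : Type*} [DecidableEq V] : List V → List V → List V
  | acc, [] => acc
  | acc, x :: xs =>
    if x ∈ acc then loopEraseAux (acc.takeWhile (fun y => y ≠ x) ++ [x]) xs
    else loopEraseAux (acc ++ [x]) xs

/-- Forward loop-erasure `E→` of a finite sequence. -/
def fwdLE {V : Type*} [DecidableEq V] (l : List V) : List V := loopEraseAux [] l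

theorem loopEraseAux_append {V : Type*} [DecidableEq V] (xs ys : List V) :
    ∀ acc, loopEraseAux acc (xs ++ ys) = loopEraseAux (loopEraseAux acc xs) ys := by
  induction xs with
  | nil => intro acc; rfl
  | cons x xs ih =>
    intro acc
    simp only [List.cons_append, loopEraseAux]
    split <;> apply ih

theorem takeWhile_append_all {V : Type*} (p : V → Bool) (P A : List V) (h : ∀ x ∈ P, p x) :
    (P ++ A).takeWhile p = P ++ A.takeWhile p := by
  induction P with
  | nil => simp
  | cons a P ih =>
    simp [List.takeWhile_cons, h a (by simp), ih (fun x hx => h x (by simp [hx]))]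

theorem loopEraseAux_chop {V : Type*} [DecidableEq V] (P : List V) (xs : List V)
    (h : ∀ x ∈ xs, x ∉ P) :
    ∀ A, loopEraseAux (P ++ A) xs = P ++ loopEraseAux A xs := by
  induction xs with
  | nil => intro A; rfl
  | cons x xs ih =>
    intro A
    have hx : x ∉ P := h x (by simp)
    have h' : ∀ y ∈ xs, y ∉ P := fun y hy => h y (by simp [hy])
    have htw : (P ++ A).takeWhile (fun y => y ≠ x) = P ++ A.takeWhile (fun y => y ≠ x) :=
      takeWhile_append_all _ _ _ (fun y hy => by
        simp only [ne_eq, decide_eq_true_eq]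
        rintro rfl; exact hx hy)
    simp only [loopEraseAux, List.mem_append]
    by_cases hA : x ∈ A
    · rw [if_pos (Or.inr hA), if_pos hA, htw, List.append_assoc]
      exact ih h' _
    · rw [if_neg (by tauto), if_neg hA, List.append_assoc]
      exact ih h' _

theorem loopEraseAux_chop' {V : Type*} [DecidableEq V] (P : List V) (xs : List V)
    (h : ∀ x ∈ xs, x ∉ P) :
    loopEraseAux P xs = P ++ fwdLE xs := by
  have := loopEraseAux_chop P xs h []
  simpa [fwdLE] using this

theorem loopEraseAux_head_inv {V : Type*} [DecidableEq V] (xs : List V) (P : List V) (v : V)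
    (h : ∀ x ∈ xs, x ∉ P) :
    ∀ B : List V, B.head? = some v →
      ∃ B', B'.head? = some v ∧ loopEraseAux (P ++ B) xs = P ++ B' := by
  induction xs with
  | nil => exact fun B hB => ⟨B, hB, rfl⟩
  | cons x xs ih =>
    intro B hB
    obtain ⟨B'', rfl⟩ : ∃ t, B = v :: t := by
      cases B with
      | nil => simp at hB
      | cons b t => exact ⟨t, by simpa using (by simpa using hB : b = v) ▸ rfl⟩
    have hx : x ∉ P := h x (by simp)
    have h' : ∀ y ∈ xs, y ∉ P := fun y hy => h y (by simp [hy])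
    simp only [loopEraseAux, List.mem_append]
    by_cases hA : x ∈ v :: B''
    · rw [if_pos (Or.inr hA),
        takeWhile_append_all _ _ _ (fun y hy => by
          simp only [ne_eq, decide_eq_true_eq]; rintro rfl; exact hx hy),
        List.append_assoc]
      refine ih h' _ ?_
      by_cases hvx : v = x
      · subst hvx; simp [List.takeWhile_cons]
      · simp [List.takeWhile_cons, hvx]
    · rw [if_neg (by tauto), List.append_assoc]
      exact ih h' _ (by simp)

theorem loopEraseAux_nodup {V : Type*} [DecidableEq V] (xs : List V) :
    ∀ acc : List V, acc.Nodup → (loopEraseAux acc xs).Nodup := by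
  induction xs with
  | nil => exact fun acc h => h
  | cons x xs ih =>
    intro acc hacc
    simp only [loopEraseAux]
    split
    · apply ih
      refine List.Nodup.append ((List.takeWhile_sublist _).nodup hacc)
        (List.nodup_singleton x) ?_
      intro a ha hb
      have := List.mem_takeWhile_imp ha
      simp only [ne_eq, decide_eq_true_eq] at this
      simp at hb
      exact this hb
    · rename_i hxacc
      apply ih
      refine List.Nodup.append hacc (List.nodup_singleton x) ?_
      intro a ha hb
      rw [List.mem_singleton] at hb
      exact hxacc (hb ▸ ha)

theorem loopEraseAux_singleton_concat {V : Type*} [DecidableEq V] (acc : List V) (x : V) :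
    ∃ c, loopEraseAux acc [x] = c ++ [x] := by
  simp only [loopEraseAux]
  split
  · exact ⟨_, rfl⟩
  · exact ⟨_, rfl⟩

/-- Decomposition of the forward loop-erasure at an intermediate time `T`: let
`Y` be the forward loop-erasure of the initial segment `(x_0, …, x_T)`, let `S`
be the first index with `Y S ∈ {x_T, …, x_n}` (say `Y S = v`), and let `τ` be
the last time at which the path visits `v`. Then `τ ≥ T`, and the forward
loop-erasure of the whole path is the concatenation of `(Y_0, …, Y_S)` with the
forward loop-erasure of `(x_τ, …, x_n)` with its first entry removed. -/
theorem stmt10 (V : Type*) [DecidableEq V] (l : List V) (T S τ : ℕ) (v : V)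
    (hT : T < l.length)
    (hSv : (fwdLE (l.take (T + 1)))[S]? = some v)
    (hSmem : v ∈ l.drop T)
    (hSmin : ∀ s < S, ∀ u, (fwdLE (l.take (T + 1)))[s]? = some u → u ∉ l.drop T)
    (hτv : l[τ]? = some v)
    (hτmax : ∀ t, τ < t → ∀ u, l[t]? = some u → u ≠ v) :
    T ≤ τ ∧
      fwdLE l = (fwdLE (l.take (T + 1))).take (S + 1) ++ (fwdLE (l.drop τ)).tail := by
  set Y := fwdLE (l.take (T + 1)) with hYdef
  obtain ⟨hSlen, hYS⟩ := List.getElem?_eq_some_iff.1 hSv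
  obtain ⟨hτlen, hτget⟩ := List.getElem?_eq_some_iff.1 hτv
  -- T ≤ τ
  obtain ⟨i, hi, hvi⟩ := List.getElem_of_mem hSmem
  have hilen : T + i < l.length := by simp [List.length_drop] at hi; omega
  have hgi : l[T + i]? = some v := by
    rw [List.getElem?_eq_some_iff]
    exact ⟨hilen, by rw [← List.getElem_drop (xs := l) (i := T)]; exact hvi⟩
  have hTτ : T ≤ τ := by
    by_contra hcon
    push_neg at hcon
    rcases Nat.lt_or_ge τ (T + i) with h | h
    · exact hτmax (T + i) h v hgi rfl
    · have : τ = T + i ∧ i = 0 := by omega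
      omega
  refine ⟨hTτ, ?_⟩
  -- elements of the path after T avoid Y.take S
  have hP : ∀ x ∈ l.drop T, x ∉ Y.take S := by
    intro x hx hmem
    obtain ⟨s, hs, hseq⟩ := List.getElem_of_mem hmem
    have hs' : s < S := by simp [List.length_take] at hs; omega
    refine hSmin s hs' x ?_ hx
    rw [List.getElem?_eq_some_iff]
    exact ⟨by simp [List.length_take] at hs; omega, by rw [← List.getElem_take]; exact hseq⟩
  have hvP : v ∉ Y.take S := hP v hSmem
  -- subset facts
  have hsub1 : l.drop (T + 1) ⊆ l.drop T := by
    have h : l.drop (T + 1) = (l.drop T).drop 1 := by rw [List.drop_drop]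
    rw [h]; exact List.drop_subset _ _
  have hsub2 : l.drop (τ + 1) ⊆ l.drop T := by
    have h : l.drop (τ + 1) = (l.drop T).drop (τ + 1 - T) := by
      rw [List.drop_drop]; congr 1; omega
    rw [h]; exact List.drop_subset _ _
  have hafter : ∀ x ∈ l.drop (τ + 1), x ≠ v := by
    intro x hx
    obtain ⟨j, hj, hjeq⟩ := List.getElem_of_mem hx
    refine hτmax (τ + 1 + j) (by omega) x ?_
    rw [List.getElem?_eq_some_iff]
    refine ⟨by simp [List.length_drop] at hj; omega, ?_⟩
    rw [← List.getElem_drop (xs := l) (i := τ + 1)]; exact hjeq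
  -- split the computation at time T
  have hl1 : fwdLE l = loopEraseAux Y (l.drop (T + 1)) := by
    conv_lhs => rw [← List.take_append_drop (T + 1) l]
    rw [fwdLE, loopEraseAux_append]
    rfl
  have hdropτ : l.drop τ = v :: l.drop (τ + 1) := by
    rw [List.drop_eq_getElem_cons hτlen, hτget]
  have h2 : (fwdLE (l.drop τ)).tail = fwdLE (l.drop (τ + 1)) := by
    rw [hdropτ]
    have hstep : loopEraseAux ([] : List V) (v :: l.drop (τ + 1))
        = loopEraseAux [v] (l.drop (τ + 1)) := by
      simp [loopEraseAux]
    rw [fwdLE, hstep, loopEraseAux_chop' [v] _ (fun x hx => by simp [hafter x hx])]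
    simp
  rw [hl1, h2]
  rcases eq_or_lt_of_le hTτ with hEq | hlt
  · -- case τ = T
    subst hEq
    have hnodup : Y.Nodup := loopEraseAux_nodup _ _ List.nodup_nil
    have htake : l.take (T + 1) = l.take T ++ [v] := by
      rw [List.take_succ, hτv]; rfl
    obtain ⟨c, hc⟩ := loopEraseAux_singleton_concat (fwdLE (l.take T)) v
    have hYlast : Y = c ++ [v] := by
      rw [hYdef, htake, fwdLE, loopEraseAux_append]
      exact hc
    have hYlen : Y.length = c.length + 1 := by rw [hYlast]; simp
    have hYc : Y[c.length]'(by omega) = v := by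
      have h : Y[c.length]? = some v := by
        rw [hYlast, List.getElem?_append_right (le_refl _)]
        simp
      exact (List.getElem?_eq_some_iff.1 h).2
    have hSc : S = c.length := by
      have := hnodup.getElem_inj_iff (i := S) (hi := hSlen) (j := c.length) (hj := by omega)
      exact this.1 (by rw [hYS, hYc])
    have hStake : Y.take (S + 1) = Y := by
      have : S + 1 = Y.length := by omega
      rw [this, List.take_length]
    rw [hStake]
    have hcY : Y.take S = c := by
      rw [hSc, hYlast, List.take_left]
    rw [loopEraseAux_chop' Y _ ?_]
    intro x hx hxY
    rw [hYlast, List.mem_append, List.mem_singleton] at hxY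
    rcases hxY with h | h
    · exact hP x (hsub1 hx) (by rw [hcY]; exact h)
    · exact hafter x hx h
  · -- case T < τ
    have hzslen : τ - (T + 1) < (l.drop (T + 1)).length := by
      simp [List.length_drop]; omega
    have hzssplit : l.drop (T + 1)
        = (l.drop (T + 1)).take (τ - (T + 1)) ++ v :: l.drop (τ + 1) := by
      conv_lhs => rw [← List.take_append_drop (τ - (T + 1)) (l.drop (T + 1))]
      congr 1
      rw [List.drop_drop]
      have h : T + 1 + (τ - (T + 1)) = τ := by omega
      rw [h, hdropτ]
    have htakesub : ∀ x ∈ (l.drop (T + 1)).take (τ - (T + 1)), x ∉ Y.take S :=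
      fun x hx => hP x (hsub1 (List.take_subset _ _ hx))
    have hhead : (Y.drop S).head? = some v := by rw [List.head?_drop, hSv]
    obtain ⟨B', hB'head, hB'⟩ :=
      loopEraseAux_head_inv ((l.drop (T + 1)).take (τ - (T + 1))) (Y.take S) v htakesub
        (Y.drop S) hhead
    rw [List.take_append_drop] at hB'
    rw [hzssplit, loopEraseAux_append, hB']
    obtain ⟨B'', rfl⟩ : ∃ t, B' = v :: t := by
      cases B' with
      | nil => simp at hB'head
      | cons b t => exact ⟨t, by simpa using (by simpa using hB'head : b = v) ▸ rfl⟩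
    simp only [loopEraseAux]
    rw [if_pos (by simp),
      takeWhile_append_all _ _ _ (fun y hy => by
        simp only [ne_eq, decide_eq_true_eq]; rintro rfl; exact hvP hy)]
    have hempt : (v :: B'').takeWhile (fun y => y ≠ v) = [] := by
      simp [List.takeWhile_cons]
    rw [hempt, List.append_nil]
    rw [loopEraseAux_chop' (Y.take S ++ [v]) _ ?_]
    · have hts : Y.take (S + 1) = Y.take S ++ [v] := by
        rw [List.take_succ, hSv]; rfl
      rw [hts]
    · intro x hx hxm
      rw [List.mem_append, List.mem_singleton] at hxm
      rcases hxm with h | h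
      · exact hP x (hsub2 hx) h
      · exact hafter x hx h
end
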